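/- In spherical space, with a = m_a·p, b = m_b·q material vectors (p, q ∈ S^n unit vectors, a+b ≠ 0), letting d₁ and d₂ be the spherical distances from p and q respectively to the normalized mass center (a+b)/|a+b|, the spherical lever law holds: m_a · sin d₁ = m_b · sin d₂. -/

import Mathlib

/-- Spherical lever law: `m_a sin d₁ = m_b sin d₂`, where `d₁, d₂` are the
spherical distances from `p` and `q` to the mass center `(a+b)/‖a+b‖`. -/
theorem spherical_lever_law (n : ℕ) (p q : EuclideanSpace ℝ (Fin (n+1)))
    (hp : ‖p‖ = 1) (hq : ‖q‖ = 1) (ma mb d₁ d₂ : ℝ) (hma : 0 < ma) (hmb : 0 < mb)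
    (hne : ma • p + mb • q ≠ 0)
    (hd₁0 : 0 ≤ d₁) (hd₁π : d₁ ≤ Real.pi) (hd₂0 : 0 ≤ d₂) (hd₂π : d₂ ≤ Real.pi)
    (hd₁ : Real.cos d₁ = (inner ℝ p (‖ma • p + mb • q‖⁻¹ • (ma • p + mb • q)) : ℝ))
    (hd₂ : Real.cos d₂ = (inner ℝ q (‖ma • p + mb • q‖⁻¹ • (ma • p + mb • q)) : ℝ)) :
    ma * Real.sin d₁ = mb * Real.sin d₂ := by
  set t : ℝ := inner ℝ p q with ht
  set r : ℝ := ‖ma • p + mb • q‖ with hrdef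
  have hr : 0 < r := norm_pos_iff.mpr hne
  have hpp : (inner ℝ p p : ℝ) = 1 := by
    rw [real_inner_self_eq_norm_sq, hp]; norm_num
  have hqq : (inner ℝ q q : ℝ) = 1 := by
    rw [real_inner_self_eq_norm_sq, hq]; norm_num
  have hqp : (inner ℝ q p : ℝ) = t := (real_inner_comm q p).symm
  have hr2 : r ^ 2 = ma ^ 2 + 2 * (ma * mb * t) + mb ^ 2 := by
    rw [hrdef, norm_add_sq_real, inner_smul_left, inner_smul_right, norm_smul, norm_smul,
      hp, hq]
    simp [abs_of_pos hma, abs_of_pos hmb, ht]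
    ring
  have hc1 : Real.cos d₁ = r⁻¹ * (ma + mb * t) := by
    rw [hd₁, inner_smul_right, inner_add_right, inner_smul_right, inner_smul_right, hpp]
    ring
  have hc2 : Real.cos d₂ = r⁻¹ * (mb + ma * t) := by
    rw [hd₂, inner_smul_right, inner_add_right, inner_smul_right, inner_smul_right, hqq, hqp]
    ring
  have hs1 : 0 ≤ Real.sin d₁ := Real.sin_nonneg_of_nonneg_of_le_pi hd₁0 hd₁π
  have hs2 : 0 ≤ Real.sin d₂ := Real.sin_nonneg_of_nonneg_of_le_pi hd₂0 hd₂π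
  have hsq : (ma * Real.sin d₁) ^ 2 = (mb * Real.sin d₂) ^ 2 := by
    have h1 : Real.sin d₁ ^ 2 = 1 - Real.cos d₁ ^ 2 := by
      have := Real.sin_sq_add_cos_sq d₁; linarith
    have h2 : Real.sin d₂ ^ 2 = 1 - Real.cos d₂ ^ 2 := by
      have := Real.sin_sq_add_cos_sq d₂; linarith
    have key : ma ^ 2 * (r ^ 2 - (ma + mb * t) ^ 2)
        = mb ^ 2 * (r ^ 2 - (mb + ma * t) ^ 2) := by
      rw [hr2]; ring
    have hrne : r ≠ 0 := ne_of_gt hr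
    have hinv : r⁻¹ ^ 2 * r ^ 2 = 1 := by field_simp
    rw [mul_pow, mul_pow, h1, h2, hc1, hc2]
    linear_combination r⁻¹ ^ 2 * key - (ma ^ 2 - mb ^ 2) * hinv
  exact (sq_eq_sq₀ (mul_nonneg hma.le hs1) (mul_nonneg hmb.le hs2)).mp hsq
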